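/- arXiv:1510.07230 — 2 statements merged into one kernel-verified Lean document; each statement's English description precedes it below -/
import Mathlib

section
/- In the nonmonotone line search scheme with C^{(l+1)} = (η Q^{(l)} C^{(l)} + E^{(l+1)})/Q^{(l+1)}, Q^{(l+1)} = η Q^{(l)} + 1, Q^{(0)} = 1, if at every step E^{(l+1)} ≤ C^{(l)} − δ_l for some δ_l ≥ 0, then C^{(l+1)} ≤ C^{(l)} − δ_l / Q^{(l+1)}; in particular the sequence (C^{(l)}) is nonincreasing, and E^{(l)} ≤ C^{(l)} ≤ E^{(0)} for all l. -/
theorem nonmonotone_reference_decrease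
    (η : ℝ) (hη0 : 0 ≤ η) (hη1 : η < 1)
    (E C Q : ℕ → ℝ) (δ : ℕ → ℝ)
    (hQ0 : Q 0 = 1) (hC0 : C 0 = E 0)
    (hQ : ∀ l, Q (l + 1) = η * Q l + 1)
    (hC : ∀ l, C (l + 1) = (η * Q l * C l + E (l + 1)) / Q (l + 1))
    (hδ : ∀ l, 0 ≤ δ l)
    (hdec : ∀ l, E (l + 1) ≤ C l - δ l) :
    (∀ l, C (l + 1) ≤ C l - δ l / Q (l + 1)) ∧
    (∀ l, C (l + 1) ≤ C l) ∧
    (∀ l, E l ≤ C l ∧ C l ≤ E 0) := by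
  have hQ1 : ∀ l, 1 ≤ Q l := by
    intro l
    induction l with
    | zero => simp [hQ0]
    | succ n ih =>
      rw [hQ n]
      nlinarith
  have hQpos : ∀ l, 0 < Q l := fun l => lt_of_lt_of_le one_pos (hQ1 l)
  have key : ∀ l, C (l + 1) ≤ C l - δ l / Q (l + 1) := by
    intro l
    rw [hC l, div_le_iff₀ (hQpos (l+1)), sub_mul,
      div_mul_cancel₀ _ (ne_of_gt (hQpos (l+1))), hQ l]
    have h1 : E (l + 1) ≤ C l - δ l := hdec l
    have h2 : 0 ≤ η * Q l := mul_nonneg hη0 (le_trans zero_le_one (hQ1 l))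
    nlinarith [mul_nonneg h2 (show (0:ℝ) ≤ C l - E (l+1) by linarith [hδ l])]
  have mono : ∀ l, C (l + 1) ≤ C l := by
    intro l
    have := key l
    have : δ l / Q (l + 1) ≥ 0 := div_nonneg (hδ l) (le_of_lt (hQpos (l+1)))
    linarith [key l]
  have EleC : ∀ l, E l ≤ C l := by
    intro l
    cases l with
    | zero => simp [hC0]
    | succ n =>
      rw [hC n]
      rw [le_div_iff₀ (hQpos (n+1)), hQ n]
      have h1 : E (n + 1) ≤ C n - δ n := hdec n
      have h2 : 0 ≤ η * Q n := mul_nonneg hη0 (le_trans zero_le_one (hQ1 n))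
      nlinarith [mul_nonneg h2 (show (0:ℝ) ≤ C n - E (n+1) by linarith [hδ n])]
  refine ⟨key, mono, fun l => ⟨EleC l, ?_⟩⟩
  induction l with
  | zero => simp [hC0]
  | succ n ih => exact le_trans (mono n) ih
end

section
/- If a sequence (E^{(l)}) of real numbers is bounded below and satisfies E^{(l+1)} ≤ C^{(l)} − ρ₁ τ^{(l)} s^{(l)} with the nonmonotone references C^{(l)} defined by C^{(0)} = E^{(0)}, C^{(l+1)} = (η Q^{(l)} C^{(l)} + E^{(l+1)})/Q^{(l+1)}, Q^{(l+1)} = η Q^{(l)} + 1, Q^{(0)} = 1, where ρ₁ > 0, η ∈ [0,1), τ^{(l)} ≥ τ_min > 0, and s^{(l)} ≥ 0, then Σ_{l=0}^∞ s^{(l)} < ∞; in particular s^{(l)} → 0. -/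
open Filter

theorem nonmonotone_line_search_summable
    (η : ℝ) (hη0 : 0 ≤ η) (hη1 : η < 1)
    (E C Q : ℕ → ℝ) (ρ₁ : ℝ) (hρ₁ : 0 < ρ₁)
    (τ : ℕ → ℝ) (τmin : ℝ) (hτmin : 0 < τmin) (hτ : ∀ l, τmin ≤ τ l)
    (s : ℕ → ℝ) (hs : ∀ l, 0 ≤ s l)
    (hbdd : ∃ m : ℝ, ∀ l, m ≤ E l)
    (hQ0 : Q 0 = 1) (hC0 : C 0 = E 0)
    (hQ : ∀ l, Q (l + 1) = η * Q l + 1)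
    (hC : ∀ l, C (l + 1) = (η * Q l * C l + E (l + 1)) / Q (l + 1))
    (hdec : ∀ l, E (l + 1) ≤ C l - ρ₁ * τ l * s l) :
    Summable s ∧ Tendsto s atTop (nhds 0) := by
  obtain ⟨m, hm⟩ := hbdd
  have h1η : 0 < 1 - η := by linarith
  have hQ1 : ∀ l, 1 ≤ Q l := by
    intro l
    induction l with
    | zero => rw [hQ0]
    | succ n ih => rw [hQ n]; nlinarith
  have hQpos : ∀ l, 0 < Q l := fun l => lt_of_lt_of_le one_pos (hQ1 l)
  have hQub : ∀ l, Q l * (1 - η) ≤ 1 := by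
    intro l
    induction l with
    | zero => rw [hQ0]; nlinarith
    | succ n ih => rw [hQ n]; nlinarith
  have hCm : ∀ l, m ≤ C l := by
    intro l
    induction l with
    | zero => rw [hC0]; exact hm 0
    | succ n ih =>
      rw [hC n, le_div_iff₀ (hQpos (n+1)), hQ n]
      have hE := hm (n+1)
      have hq := hQpos n
      nlinarith [mul_le_mul_of_nonneg_left ih (mul_nonneg hη0 hq.le)]
  set c : ℝ := ρ₁ * τmin * (1 - η) with hc
  have hcpos : 0 < c := by positivity
  have key : ∀ l, c * s l ≤ C l - C (l + 1) := by
    intro l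
    have hCl : C (l + 1) * Q (l + 1) ≤ C l * Q (l + 1) - ρ₁ * τ l * s l := by
      have h2 : C (l+1) * Q (l+1) = η * Q l * C l + E (l + 1) := by
        rw [hC l, div_mul_cancel₀ _ (hQpos (l+1)).ne']
      rw [h2, hQ l]
      have := hdec l
      nlinarith
    -- c * s l * Q (l+1) ≤ ρ₁ * τ l * s l
    have h3 : c * s l * Q (l + 1) ≤ ρ₁ * τ l * s l := by
      have hτl := hτ l
      have hsl := hs l
      have hub := hQub (l + 1)
      have hqp := (hQpos (l + 1)).le
      calc c * s l * Q (l + 1) = (ρ₁ * τmin * s l) * (Q (l+1) * (1 - η)) := by ring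
        _ ≤ (ρ₁ * τmin * s l) * 1 := by
            apply mul_le_mul_of_nonneg_left hub; positivity
        _ ≤ ρ₁ * τ l * s l := by
            nlinarith [mul_le_mul_of_nonneg_right (mul_le_mul_of_nonneg_left hτl hρ₁.le) hsl]
    have hqp := hQpos (l + 1)
    have h4 : c * s l * Q (l + 1) ≤ (C l - C (l + 1)) * Q (l + 1) := by nlinarith
    exact le_of_mul_le_mul_right (by linarith [h4]) hqp
  have hsum : Summable (fun l => c * s l) := by
    apply summable_of_sum_range_le (c := C 0 - m)
    · intro n; exact mul_nonneg hcpos.le (hs n)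
    · intro n
      calc ∑ i ∈ Finset.range n, c * s i
          ≤ ∑ i ∈ Finset.range n, (C i - C (i + 1)) :=
            Finset.sum_le_sum (fun i _ => key i)
        _ = C 0 - C n := by rw [Finset.sum_range_sub' C]
        _ ≤ C 0 - m := by linarith [hCm n]
  have hsummable : Summable s := by
    have := hsum.mul_left c⁻¹
    simpa [← mul_assoc, inv_mul_cancel₀ hcpos.ne'] using this
  exact ⟨hsummable, hsummable.tendsto_atTop_zero⟩
end
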